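/- arXiv:2507.17981 — 13 statements merged into one kernel-verified Lean document; each statement's English description precedes it below -/
import Mathlib

section
/- Every candidate in the k-approval veto core satisfies the k-mutual minority criterion. That is, if a candidate c is not k-blocked by any coalition, then there is no subset S of candidates with c ∈ S and a coalition T of voters such that every voter in T ranks all candidates outside S above all candidates in S, and |T|/n > |S|/k. -/
/-- Voter `v` prefers candidate `c` over `c'` (lower rank is better). -/
def Prefers {V C : Type*} {m : ℕ} (rank : V → C ≃ Fin m) (v : V) (c c' : C) : Prop :=
  rank v c < rank v c'

/-- The `k`-approval score of candidate `c`. -/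
def apv {V C : Type*} [Fintype V] {m : ℕ} (rank : V → C ≃ Fin m) (k : ℕ) (c : C) : ℕ :=
  (Finset.univ.filter fun v => ((rank v c : Fin m) : ℕ) < k).card

/-- Coalition `T` `k`-blocks candidate `w` with witness set `S`: every voter in `T`
prefers every candidate of `S` over `w`, and `|T|/n > 1 - apv_k(S)/(n*k)`. -/
def KBlocks {V C : Type*} [Fintype V] {m : ℕ} (rank : V → C ≃ Fin m) (k : ℕ)
    (T : Finset V) (S : Finset C) (w : C) : Prop :=
  (∀ v ∈ T, ∀ c ∈ S, Prefers rank v c w) ∧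
  (T.card : ℚ) / (Fintype.card V) >
    1 - (∑ c ∈ S, (apv rank k c : ℚ)) / ((Fintype.card V) * k)

/-- Coalition `T` solidly vetoes `S`: every voter in `T` prefers every candidate
outside `S` over every candidate in `S`. -/
def SolidlyVetoes {V C : Type*} {m : ℕ} (rank : V → C ≃ Fin m)
    (T : Finset V) (S : Finset C) : Prop :=
  ∀ v ∈ T, ∀ c' ∉ S, ∀ c ∈ S, Prefers rank v c' c

lemma filter_lt_card_aux {C : Type*} [Fintype C] {m k : ℕ} (e : C ≃ Fin m) (hkm : k ≤ m) :
    (Finset.univ.filter fun c => ((e c : Fin m) : ℕ) < k).card = k := by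
  have h : (Finset.univ.filter fun c => ((e c : Fin m) : ℕ) < k).card
      = (Finset.univ : Finset (Fin k)).card := by
    apply Finset.card_bij' (fun c hc => (⟨(e c : ℕ), by simpa using hc⟩ : Fin k))
      (fun i _ => e.symm (Fin.castLE hkm i))
    · intro c hc; exact Finset.mem_univ _
    · intro c hc
      apply e.injective
      rw [Equiv.apply_symm_apply]
      ext
      simp
    · intro i _
      ext
      simp
    · intro i _
      simp only [Finset.mem_filter, Finset.mem_univ, true_and, Equiv.apply_symm_apply]
      exact i.isLt
  simpa using h

/-- Every candidate in the `k`-approval veto core satisfies the `k`-mutual minority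
criterion. -/
theorem core_satisfies_mutual_minority {V C : Type*} [Fintype V] {m : ℕ}
    (rank : V → C ≃ Fin m) (k : ℕ) (hk : 1 ≤ k) (hkm : k ≤ m)
    (hn : 0 < Fintype.card V) (c : C)
    (hcore : ∀ (T : Finset V) (S : Finset C), ¬ KBlocks rank k T S c) :
    ¬ ∃ (S : Finset C) (T : Finset V), c ∈ S ∧ SolidlyVetoes rank T S ∧
      (T.card : ℚ) / (Fintype.card V) > (S.card : ℚ) / k := by
  rintro ⟨S, T, hcS, hveto, hgt⟩
  obtain ⟨v0⟩ := Fintype.card_pos_iff.mp hn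
  haveI : Fintype C := Fintype.ofEquiv (Fin m) (rank v0).symm
  classical
  apply hcore T Sᶜ
  constructor
  · intro v hv c' hc'
    exact hveto v hv c' (by simpa using hc') c hcS
  · have hsum : ∑ c : C, apv rank k c = Fintype.card V * k := by
      calc ∑ c : C, apv rank k c
          = ∑ c : C, ∑ v : V, if ((rank v c : Fin m) : ℕ) < k then 1 else 0 := by
            simp_rw [apv, Finset.card_filter]
        _ = ∑ v : V, ∑ c : C, if ((rank v c : Fin m) : ℕ) < k then 1 else 0 :=
            Finset.sum_comm
        _ = ∑ _v : V, k := by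
            refine Finset.sum_congr rfl fun v _ => ?_
            rw [← Finset.card_filter]
            exact filter_lt_card_aux (rank v) hkm
        _ = Fintype.card V * k := by simp [Finset.card_univ, mul_comm]
    set n : ℚ := (Fintype.card V : ℚ) with hndef
    have hnpos : (0:ℚ) < n := by rw [hndef]; exact_mod_cast hn
    have hkpos : (0:ℚ) < (k:ℚ) := by exact_mod_cast hk
    have hnk : (0:ℚ) < n * k := mul_pos hnpos hkpos
    have h1 : ∑ c : C, (apv rank k c : ℚ) = n * k := by
      have := congrArg (Nat.cast : ℕ → ℚ) hsum
      push_cast at this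
      simpa [hndef] using this
    have hcompl : (∑ c ∈ Sᶜ, (apv rank k c : ℚ)) = n * k - ∑ c ∈ S, (apv rank k c : ℚ) := by
      have h2 := Finset.sum_add_sum_compl S (fun c => (apv rank k c : ℚ))
      rw [h1] at h2
      linarith
    have hA : (∑ c ∈ S, (apv rank k c : ℚ)) ≤ (S.card : ℚ) * n := by
      calc (∑ c ∈ S, (apv rank k c : ℚ)) ≤ ∑ _c ∈ S, n := by
            refine Finset.sum_le_sum fun c _ => ?_
            have : apv rank k c ≤ Fintype.card V := by
              apply le_trans (Finset.card_filter_le _ _)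
              simp
            rw [hndef]
            exact_mod_cast this
        _ = (S.card : ℚ) * n := by simp [mul_comm]
    rw [hcompl]
    have heq : 1 - (n * k - ∑ c ∈ S, (apv rank k c : ℚ)) / (n * k)
        = (∑ c ∈ S, (apv rank k c : ℚ)) / (n * k) := by
      field_simp
      ring
    rw [heq]
    have hle : (∑ c ∈ S, (apv rank k c : ℚ)) / (n * k) ≤ (S.card : ℚ) / k := by
      rw [div_le_div_iff₀ hnk hkpos]
      nlinarith
    exact lt_of_le_of_lt hle hgt
end

section
/- The (m−1)-approval veto core is contained in the m-approval veto core: if the (m−1)-domination graph of a candidate w has a perfect matching, then so does the m-domination graph of w. -/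
/-- The `k`-domination graph of `w` has a perfect matching: a bijection between the
`k` copies of the voters and the copies of the candidates (`apv_k(c)` copies of each
candidate `c`) matching each (copy of a) voter `v` to a (copy of a) candidate that `v`
ranks weakly below `w`. -/
def HasPerfectMatching {V C : Type*} [Fintype V] {m : ℕ} (rank : V → C ≃ Fin m)
    (k : ℕ) (w : C) : Prop :=
  ∃ f : (V × Fin k) ≃ (Σ c : C, Fin (apv rank k c)),
    ∀ p : V × Fin k, rank p.1 w ≤ rank p.1 (f p).1

/-- The `(m-1)`-approval veto core is contained in the `m`-approval veto core:
if the `(m-1)`-domination graph of `w` has a perfect matching, so does the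
`m`-domination graph of `w`. -/
theorem core_m_sub_one_subset_core_m {V C : Type*} [Fintype V] {m : ℕ}
    (hm : 1 ≤ m) (rank : V → C ≃ Fin m) (w : C)
    (h : HasPerfectMatching rank (m - 1) w) :
    HasPerfectMatching rank m w := by
  classical
  set n := m - 1 with hn
  obtain ⟨f, hf⟩ := h
  have hmn : m = n + 1 := (Nat.succ_pred_eq_of_pos hm).symm
  let bot : V → C := fun v => (rank v).symm ⟨n, by omega⟩
  let b : C → ℕ := fun c => (Finset.univ.filter fun v => bot v = c).card
  have hbot : ∀ v c, bot v = c ↔ ¬ ((rank v c : Fin m) : ℕ) < n := by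
    intro v c
    constructor
    · rintro rfl
      simp [bot, Equiv.apply_symm_apply]
    · intro hnc
      have hlt := (rank v c).isLt
      have : ((rank v c : Fin m) : ℕ) = n := by omega
      have : rank v c = ⟨n, by omega⟩ := Fin.ext this
      simp [bot, ← this, Equiv.symm_apply_apply]
  have hapv : ∀ c, apv rank m c = apv rank n c + b c := by
    intro c
    have hb : b c = (Finset.univ.filter fun v => ¬ ((rank v c : Fin m) : ℕ) < n).card := by
      apply Finset.card_bij (fun v _ => v) <;> simp [hbot]
    have hm' : apv rank m c = (Finset.univ : Finset V).card := by
      unfold apv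
      congr 1
      apply Finset.filter_true_of_mem
      intro v _
      exact (rank v c).isLt
    rw [hm', hb]
    exact (Finset.card_filter_add_card_filter_not _).symm
  let g : V ≃ Σ c : C, Fin (b c) :=
    (Equiv.sigmaFiberEquiv bot).symm.trans
      (Equiv.sigmaCongrRight fun c =>
        Fintype.equivFinOfCardEq (by simpa [b] using Fintype.card_subtype (fun v => bot v = c)))
  have hg : ∀ v, (g v).1 = bot v := fun v => rfl
  let e : V × Fin m ≃ (V × Fin n) ⊕ V :=
    ((Equiv.refl V).prodCongr ((finCongr hmn).trans finSumFinEquiv.symm)).trans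
      ((Equiv.prodSumDistrib V (Fin n) (Fin 1)).trans
        (Equiv.sumCongr (Equiv.refl _) (Equiv.prodUnique V (Fin 1))))
  let s : ((Σ c : C, Fin (apv rank n c)) ⊕ (Σ c : C, Fin (b c))) ≃ Σ c : C, Fin (apv rank m c) :=
    (Equiv.sigmaSumDistrib _ _).symm.trans
      (Equiv.sigmaCongrRight fun c => finSumFinEquiv.trans (finCongr (hapv c).symm))
  refine ⟨e.trans ((f.sumCongr g).trans s), ?_⟩
  intro p
  have hle : ∀ a : Fin m, a ≤ (⟨n, by omega⟩ : Fin m) := by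
    intro a
    have := a.isLt
    exact Fin.le_def.mpr (by simp; omega)
  rcases hsum : finSumFinEquiv.symm ((finCongr hmn) p.2) with j | u
  · have he : e p = Sum.inl (p.1, j) := by
      simp only [e, Equiv.trans_apply, Equiv.prodCongr_apply, Equiv.coe_refl, Prod.map]
      rw [hsum]
      simp
    have : ((e.trans ((f.sumCongr g).trans s)) p).1 = (f (p.1, j)).1 := by
      simp only [Equiv.trans_apply, he]
      rfl
    rw [this]
    exact hf (p.1, j)
  · have he : e p = Sum.inr p.1 := by
      simp only [e, Equiv.trans_apply, Equiv.prodCongr_apply, Equiv.coe_refl, Prod.map]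
      rw [hsum]
      simp
    have : ((e.trans ((f.sumCongr g).trans s)) p).1 = bot p.1 := by
      simp only [Equiv.trans_apply, he]
      rfl
    rw [this]
    have : rank p.1 (bot p.1) = ⟨n, by omega⟩ := Equiv.apply_symm_apply _ _
    rw [this]
    exact hle _
end

section
/- Every candidate in the m-approval veto core (the proportional veto core) has utilitarian metric distortion at most 2m−1: if w is not m-blocked by any coalition, then for every metric d consistent with the rankings and every candidate c*, Σ_v d(v,w) ≤ (2m−1) · Σ_v d(v,c*). -/
/-- Coalition `T` `m`-blocks candidate `w` with witness set `S` (using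
`apv_m(S) = n·|S|`): every voter in `T` prefers all of `S` over `w` and
`|T|/n > 1 - |S|/m`. -/
def MBlocks {V C : Type*} [Fintype V] {m : ℕ} (rank : V → C ≃ Fin m)
    (T : Finset V) (S : Finset C) (w : C) : Prop :=
  (∀ v ∈ T, ∀ c ∈ S, Prefers rank v c w) ∧
  (T.card : ℚ) / (Fintype.card V) > 1 - (S.card : ℚ) / m

/-- Every candidate in the `m`-approval veto core (the proportional veto core) has
utilitarian metric distortion at most `2m - 1`. -/
theorem proportional_core_distortion {V C : Type*} [Fintype V] {m : ℕ}
    (rank : V → C ≃ Fin m) (hn : 0 < Fintype.card V) (hm : 1 ≤ m)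
    (d : V ⊕ C → V ⊕ C → ℝ)
    (hrefl : ∀ x, d x x = 0)
    (hsymm : ∀ x y, d x y = d y x)
    (htri : ∀ x y z, d x z ≤ d x y + d y z)
    (hcons : ∀ (v : V) (c c' : C), Prefers rank v c c' →
      d (Sum.inl v) (Sum.inr c) ≤ d (Sum.inl v) (Sum.inr c'))
    (w : C) (hcore : ∀ (T : Finset V) (S : Finset C), ¬ MBlocks rank T S w)
    (cstar : C) :
    ∑ v : V, d (Sum.inl v) (Sum.inr w) ≤
      (2 * (m : ℝ) - 1) * ∑ v : V, d (Sum.inl v) (Sum.inr cstar) := by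
  classical
  have hnn : ∀ x y, 0 ≤ d x y := by
    intro x y
    nlinarith [htri x y x, hrefl x, hsymm x y]
  have hSc : 0 ≤ ∑ v : V, d (Sum.inl v) (Sum.inr cstar) :=
    Finset.sum_nonneg fun v _ => hnn _ _
  have hm1 : (1:ℝ) ≤ m := by exact_mod_cast hm
  by_cases hwc : w = cstar
  · subst hwc
    nlinarith
  · set n := Fintype.card V with hndef
    set A : Finset V := Finset.univ.filter (fun v => Prefers rank v w cstar) with hA
    set T : Finset V := Finset.univ.filter (fun v => ¬ Prefers rank v w cstar) with hT
    have hTpref : ∀ v ∈ T, Prefers rank v cstar w := by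
      intro v hv
      have hne : rank v w ≠ rank v cstar := fun h => hwc ((rank v).injective h)
      have := (Finset.mem_filter.mp hv).2
      rcases lt_or_gt_of_ne hne with h | h
      · exact absurd h this
      · exact h
    have hcardsum : A.card + T.card = n :=
      Finset.card_filter_add_card_filter_not _
    -- core condition with S = {cstar}
    have hineq : ¬ ((T.card : ℚ) / n > 1 - (({cstar} : Finset C).card : ℚ) / m) := by
      intro h
      exact hcore T {cstar} ⟨fun v hv c hc => by
        simp only [Finset.mem_singleton] at hc; subst hc; exact hTpref v hv, h⟩
    push_neg at hineq
    have hna : n ≤ m * A.card := by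
      have hm0 : (0:ℚ) < m := by exact_mod_cast hm
      have hn0 : (0:ℚ) < n := by exact_mod_cast hn
      simp only [Finset.card_singleton, Nat.cast_one] at hineq
      have h1 : (T.card : ℚ) ≤ (1 - 1 / m) * n := (div_le_iff₀ hn0).mp hineq
      have hc : (A.card : ℚ) + T.card = n := by exact_mod_cast hcardsum
      have h3 : (n:ℚ) ≤ m * A.card := by
        have h2 : (m:ℚ) * T.card ≤ (m - 1) * n := by
          have := mul_le_mul_of_nonneg_left h1 (le_of_lt hm0)
          calc (m:ℚ) * T.card ≤ m * ((1 - 1/m) * n) := this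
            _ = (m - 1) * n := by field_simp
        nlinarith
      exact_mod_cast h3
    set D : ℝ := d (Sum.inr cstar) (Sum.inr w) with hD
    have hD0 : 0 ≤ D := hnn _ _
    -- for v ∈ A : D ≤ 2 d(v, cstar)
    have hkey : ∀ v ∈ A, D ≤ 2 * d (Sum.inl v) (Sum.inr cstar) := by
      intro v hv
      have hvp : Prefers rank v w cstar := (Finset.mem_filter.mp hv).2
      have h1 := htri (Sum.inr cstar) (Sum.inl v) (Sum.inr w)
      have h2 := hcons v w cstar hvp
      have h3 := hsymm (Sum.inr cstar) (Sum.inl v)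
      linarith
    have hAD : (A.card : ℝ) * D ≤ 2 * ∑ v ∈ A, d (Sum.inl v) (Sum.inr cstar) := by
      have := Finset.sum_le_sum hkey
      rw [Finset.sum_const, nsmul_eq_mul] at this
      rw [← Finset.mul_sum] at this
      exact this
    have hSA : ∑ v ∈ A, d (Sum.inl v) (Sum.inr cstar) ≤
        ∑ v : V, d (Sum.inl v) (Sum.inr cstar) :=
      Finset.sum_le_sum_of_subset_of_nonneg (Finset.subset_univ A)
        (fun v _ _ => hnn _ _)
    -- split sums
    have hsplit : ∑ v : V, d (Sum.inl v) (Sum.inr w) =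
        (∑ v ∈ A, d (Sum.inl v) (Sum.inr w)) + ∑ v ∈ T, d (Sum.inl v) (Sum.inr w) :=
      (Finset.sum_filter_add_sum_filter_not _ _ _).symm
    have hsplitc : ∑ v : V, d (Sum.inl v) (Sum.inr cstar) =
        (∑ v ∈ A, d (Sum.inl v) (Sum.inr cstar)) +
          ∑ v ∈ T, d (Sum.inl v) (Sum.inr cstar) :=
      (Finset.sum_filter_add_sum_filter_not _ _ _).symm
    have hAbound : ∑ v ∈ A, d (Sum.inl v) (Sum.inr w) ≤
        ∑ v ∈ A, d (Sum.inl v) (Sum.inr cstar) :=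
      Finset.sum_le_sum fun v hv => hcons v w cstar (Finset.mem_filter.mp hv).2
    have hTbound : ∑ v ∈ T, d (Sum.inl v) (Sum.inr w) ≤
        (∑ v ∈ T, d (Sum.inl v) (Sum.inr cstar)) + T.card * D := by
      have h1 : ∀ v ∈ T, d (Sum.inl v) (Sum.inr w) ≤
          d (Sum.inl v) (Sum.inr cstar) + D :=
        fun v _ => htri (Sum.inl v) (Sum.inr cstar) (Sum.inr w)
      calc ∑ v ∈ T, d (Sum.inl v) (Sum.inr w)
          ≤ ∑ v ∈ T, (d (Sum.inl v) (Sum.inr cstar) + D) := Finset.sum_le_sum h1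
        _ = (∑ v ∈ T, d (Sum.inl v) (Sum.inr cstar)) + T.card * D := by
            rw [Finset.sum_add_distrib, Finset.sum_const, nsmul_eq_mul]
    -- final arithmetic
    have hcR : (A.card : ℝ) + T.card = n := by exact_mod_cast hcardsum
    have hnaR : (n : ℝ) ≤ m * A.card := by exact_mod_cast hna
    have hSAnn : 0 ≤ ∑ v ∈ A, d (Sum.inl v) (Sum.inr cstar) :=
      Finset.sum_nonneg fun v _ => hnn _ _
    have h2S : (A.card : ℝ) * D ≤ 2 * ∑ v : V, d (Sum.inl v) (Sum.inr cstar) := by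
      linarith
    have htle : (T.card : ℝ) ≤ ((m : ℝ) - 1) * A.card := by nlinarith
    have h5 : (T.card : ℝ) * D ≤ (((m : ℝ) - 1) * A.card) * D :=
      mul_le_mul_of_nonneg_right htle hD0
    have h6 : ((m : ℝ) - 1) * ((A.card : ℝ) * D) ≤
        ((m : ℝ) - 1) * (2 * ∑ v : V, d (Sum.inl v) (Sum.inr cstar)) :=
      mul_le_mul_of_nonneg_left h2S (by linarith)
    nlinarith [hsplit, hsplitc, hAbound, hTbound]
end

section
/- For any two candidates w ≠ c* and any metric d consistent with the voters' rankings, the ratio of total costs satisfies Σ_{v∈V} d(v,w) ≤ (2n/t − 1) · Σ_{v∈V} d(v,c*), where t = |{v ∈ V : v prefers w over c*}| > 0. -/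
open scoped Classical

/-- Lemma 6 of Anshelevich et al.: for candidates `w ≠ c*` and a consistent metric `d`,
`Σ_v d(v,w) ≤ (2n/t − 1) · Σ_v d(v,c*)` where `t > 0` is the number of voters
preferring `w` over `c*`. -/
theorem cost_ratio_bound {V C : Type*} [Fintype V] {m : ℕ}
    (rank : V → C ≃ Fin m)
    (d : V ⊕ C → V ⊕ C → ℝ)
    (hrefl : ∀ x, d x x = 0)
    (hsymm : ∀ x y, d x y = d y x)
    (htri : ∀ x y z, d x z ≤ d x y + d y z)
    (hcons : ∀ (v : V) (c c' : C), Prefers rank v c c' →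
      d (Sum.inl v) (Sum.inr c) ≤ d (Sum.inl v) (Sum.inr c'))
    (w cstar : C) (hne : w ≠ cstar)
    (t : ℕ) (ht : t = (Finset.univ.filter fun v => Prefers rank v w cstar).card)
    (htpos : 0 < t) :
    ∑ v : V, d (Sum.inl v) (Sum.inr w) ≤
      (2 * (Fintype.card V : ℝ) / t - 1) * ∑ v : V, d (Sum.inl v) (Sum.inr cstar) := by
  classical
  have hnonneg : ∀ x y, 0 ≤ d x y := by
    intro x y
    have h := htri x y x
    rw [hrefl, hsymm y x] at h
    linarith
  set S := (Finset.univ.filter fun v : V => Prefers rank v w cstar) with hS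
  set D : ℝ := d (Sum.inr w) (Sum.inr cstar) with hD
  set A : ℝ := ∑ v : V, d (Sum.inl v) (Sum.inr cstar) with hA
  have hApos : 0 ≤ A := Finset.sum_nonneg fun v _ => hnonneg _ _
  have hDpos : 0 ≤ D := hnonneg _ _
  have hmem : ∀ v ∈ S, d (Sum.inl v) (Sum.inr w) ≤ d (Sum.inl v) (Sum.inr cstar) := by
    intro v hv
    exact hcons v w cstar (Finset.mem_filter.mp hv).2
  have hDle : ∀ v ∈ S, D ≤ 2 * d (Sum.inl v) (Sum.inr cstar) := by
    intro v hv
    have h1 := htri (Sum.inr w) (Sum.inl v) (Sum.inr cstar)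
    have h2 := hmem v hv
    rw [hsymm (Sum.inr w) (Sum.inl v)] at h1
    linarith
  have htD : (t : ℝ) * D ≤ 2 * A := by
    have h1 : (t : ℝ) * D = ∑ _v ∈ S, D := by
      rw [Finset.sum_const, ht, nsmul_eq_mul]
    have h2 : ∑ _v ∈ S, D ≤ ∑ v ∈ S, 2 * d (Sum.inl v) (Sum.inr cstar) :=
      Finset.sum_le_sum hDle
    have h3 : ∑ v ∈ S, 2 * d (Sum.inl v) (Sum.inr cstar) ≤ 2 * A := by
      rw [← Finset.mul_sum, hA]
      have : ∑ v ∈ S, d (Sum.inl v) (Sum.inr cstar) ≤ ∑ v : V, d (Sum.inl v) (Sum.inr cstar) :=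
        Finset.sum_le_sum_of_subset_of_nonneg (Finset.subset_univ S)
          (fun v _ _ => hnonneg _ _)
      linarith
    linarith
  have htn : (t : ℝ) ≤ (Fintype.card V : ℝ) := by
    have : S.card ≤ Fintype.card V := Finset.card_le_univ S
    exact_mod_cast ht ▸ this
  -- main sum bound
  have hmain : ∑ v : V, d (Sum.inl v) (Sum.inr w) ≤ A + ((Fintype.card V : ℝ) - t) * D := by
    have hsplit : ∀ f : V → ℝ, ∑ v : V, f v = ∑ v ∈ S, f v + ∑ v ∈ Sᶜ, f v := by
      intro f
      rw [Finset.sum_add_sum_compl]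
    rw [hsplit (fun v => d (Sum.inl v) (Sum.inr w)),
        hA, hsplit (fun v => d (Sum.inl v) (Sum.inr cstar))]
    have hScard : ((Sᶜ : Finset V).card : ℝ) = (Fintype.card V : ℝ) - t := by
      rw [Finset.card_compl, ht]
      have := Finset.card_le_univ S
      push_cast [Nat.cast_sub this]
      ring
    have h1 : ∑ v ∈ S, d (Sum.inl v) (Sum.inr w) ≤ ∑ v ∈ S, d (Sum.inl v) (Sum.inr cstar) :=
      Finset.sum_le_sum hmem
    have h2 : ∑ v ∈ Sᶜ, d (Sum.inl v) (Sum.inr w) ≤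
        ∑ v ∈ Sᶜ, (d (Sum.inl v) (Sum.inr cstar) + D) := by
      refine Finset.sum_le_sum fun v _ => ?_
      have h := htri (Sum.inl v) (Sum.inr cstar) (Sum.inr w)
      rw [hsymm (Sum.inr cstar) (Sum.inr w)] at h
      linarith
    rw [Finset.sum_add_distrib, Finset.sum_const, nsmul_eq_mul, hScard] at h2
    linarith
  have htpos' : (0 : ℝ) < t := by exact_mod_cast htpos
  have hrhs : (2 * (Fintype.card V : ℝ) / t - 1) * A =
      (2 * (Fintype.card V : ℝ) * A - t * A) / t := by
    field_simp
  rw [hrhs, le_div_iff₀ htpos']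
  nlinarith [mul_nonneg (sub_nonneg.mpr htn) (sub_nonneg.mpr htD)]
end

section
/- For every pair of voters v, v′ and every pair of candidates c, c′, if v weakly prefers c over the top choice of v′, then in any metric d consistent with the rankings, d(v,c′) + d(v′,c′) ≥ d(c,c′)/2. -/
/-- Lemma 3.9 of Berger et al.: if voter `v` weakly prefers `c` over the top choice `t`
of voter `v'`, then `d(v,c') + d(v',c') ≥ d(c,c')/2` for any consistent metric. -/
theorem berger_lemma {V C : Type*} {m : ℕ}
    (rank : V → C ≃ Fin m)
    (d : V ⊕ C → V ⊕ C → ℝ)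
    (hrefl : ∀ x, d x x = 0)
    (hsymm : ∀ x y, d x y = d y x)
    (htri : ∀ x y z, d x z ≤ d x y + d y z)
    (hcons : ∀ (v : V) (c c' : C), Prefers rank v c c' →
      d (Sum.inl v) (Sum.inr c) ≤ d (Sum.inl v) (Sum.inr c'))
    (v v' : V) (c c' : C)
    (t : C) (htop : ∀ c'' : C, rank v' t ≤ rank v' c'')
    (hpref : rank v c ≤ rank v t) :
    d (Sum.inl v) (Sum.inr c') + d (Sum.inl v') (Sum.inr c') ≥
      d (Sum.inr c) (Sum.inr c') / 2 := by
  have weak : ∀ (w : V) (a b : C), rank w a ≤ rank w b →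
      d (Sum.inl w) (Sum.inr a) ≤ d (Sum.inl w) (Sum.inr b) := by
    intro w a b h
    rcases lt_or_eq_of_le h with h | h
    · exact hcons w a b h
    · have : a = b := (rank w).injective (Fin.ext (by simpa using congrArg Fin.val h))
      simp [this]
  have h1 : d (Sum.inl v) (Sum.inr c) ≤ d (Sum.inl v) (Sum.inr t) := weak v c t hpref
  have h2 : d (Sum.inl v') (Sum.inr t) ≤ d (Sum.inl v') (Sum.inr c') := weak v' t c' (htop c')
  have h3 : d (Sum.inl v) (Sum.inr t) ≤
      d (Sum.inl v) (Sum.inr c') + d (Sum.inr c') (Sum.inl v') + d (Sum.inl v') (Sum.inr t) := by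
    calc d (Sum.inl v) (Sum.inr t) ≤ d (Sum.inl v) (Sum.inr c') + d (Sum.inr c') (Sum.inr t) :=
          htri _ _ _
      _ ≤ d (Sum.inl v) (Sum.inr c') + (d (Sum.inr c') (Sum.inl v') + d (Sum.inl v') (Sum.inr t)) := by
          linarith [htri (Sum.inr c' : V ⊕ C) (Sum.inl v') (Sum.inr t)]
      _ = _ := by ring
  have h4 : d (Sum.inr c) (Sum.inr c') ≤
      d (Sum.inr c) (Sum.inl v) + d (Sum.inl v) (Sum.inr c') := htri _ _ _
  have hs1 := hsymm (Sum.inr c : V ⊕ C) (Sum.inl v)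
  have hs2 := hsymm (Sum.inr c' : V ⊕ C) (Sum.inl v')
  linarith
end

section
/- Let c and c′ be candidates such that c′ does not Pareto-dominate c (i.e., some voter weakly prefers c over c′). Then for every metric d consistent with the rankings, the egalitarian cost satisfies max_{v∈V} d(v,c) ≤ 3 · max_{v∈V} d(v,c′). -/
/-- If `c'` does not Pareto-dominate `c` (some voter weakly prefers `c` over `c'`),
then the egalitarian cost of `c` is at most 3 times that of `c'`. -/
theorem egalitarian_non_domination {V C : Type*} [Fintype V] [Nonempty V] {m : ℕ}
    (rank : V → C ≃ Fin m)
    (d : V ⊕ C → V ⊕ C → ℝ)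
    (hrefl : ∀ x, d x x = 0)
    (hsymm : ∀ x y, d x y = d y x)
    (htri : ∀ x y z, d x z ≤ d x y + d y z)
    (hcons : ∀ (v : V) (c c' : C), Prefers rank v c c' →
      d (Sum.inl v) (Sum.inr c) ≤ d (Sum.inl v) (Sum.inr c'))
    (c c' : C) (hnd : ∃ v : V, rank v c ≤ rank v c') :
    Finset.univ.sup' Finset.univ_nonempty (fun v : V => d (Sum.inl v) (Sum.inr c)) ≤
      3 * Finset.univ.sup' Finset.univ_nonempty
        (fun v : V => d (Sum.inl v) (Sum.inr c')) := by
  obtain ⟨u, hu⟩ := hnd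
  set M' := Finset.univ.sup' Finset.univ_nonempty
      (fun v : V => d (Sum.inl v) (Sum.inr c')) with hM'
  have key : d (Sum.inl u) (Sum.inr c) ≤ d (Sum.inl u) (Sum.inr c') := by
    rcases lt_or_eq_of_le hu with h | h
    · exact hcons u c c' h
    · have : c = c' := (rank u).injective h
      rw [this]
  have hcc' : d (Sum.inr c') (Sum.inr c) ≤ 2 * M' := by
    have h1 : d (Sum.inr c') (Sum.inr c) ≤
        d (Sum.inr c') (Sum.inl u) + d (Sum.inl u) (Sum.inr c) :=
      htri _ _ _
    have h2 : d (Sum.inl u) (Sum.inr c') ≤ M' := by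
      rw [hM']; exact Finset.le_sup' (fun v : V => d (Sum.inl v) (Sum.inr c')) (Finset.mem_univ u)
    rw [hsymm (Sum.inr c') (Sum.inl u)] at h1
    linarith
  apply Finset.sup'_le
  intro v _
  have h3 : d (Sum.inl v) (Sum.inr c) ≤
      d (Sum.inl v) (Sum.inr c') + d (Sum.inr c') (Sum.inr c) := htri _ _ _
  have h4 : d (Sum.inl v) (Sum.inr c') ≤ M' := by
    rw [hM']; exact Finset.le_sup' (fun v : V => d (Sum.inl v) (Sum.inr c')) (Finset.mem_univ v)
  linarith
end

section
/- Every Pareto efficient candidate has egalitarian metric distortion at most 3: if c is not Pareto-dominated by any candidate, then for every consistent metric d and every candidate c*, max_v d(v,c) ≤ 3 · max_v d(v,c*). -/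
/-- `c'` Pareto-dominates `c` if every voter strictly prefers `c'` over `c`. -/
def ParetoDominates {V C : Type*} {m : ℕ} (rank : V → C ≃ Fin m) (c' c : C) : Prop :=
  ∀ v : V, Prefers rank v c' c

/-- Every Pareto efficient candidate has egalitarian metric distortion at most 3. -/
theorem pareto_efficient_egalitarian {V C : Type*} [Fintype V] [Nonempty V] {m : ℕ}
    (rank : V → C ≃ Fin m)
    (d : V ⊕ C → V ⊕ C → ℝ)
    (hrefl : ∀ x, d x x = 0)
    (hsymm : ∀ x y, d x y = d y x)
    (htri : ∀ x y z, d x z ≤ d x y + d y z)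
    (hcons : ∀ (v : V) (c c' : C), Prefers rank v c c' →
      d (Sum.inl v) (Sum.inr c) ≤ d (Sum.inl v) (Sum.inr c'))
    (c : C) (heff : ∀ c' : C, ¬ ParetoDominates rank c' c)
    (cstar : C) :
    Finset.univ.sup' Finset.univ_nonempty (fun v : V => d (Sum.inl v) (Sum.inr c)) ≤
      3 * Finset.univ.sup' Finset.univ_nonempty
        (fun v : V => d (Sum.inl v) (Sum.inr cstar)) := by
  set M := Finset.univ.sup' Finset.univ_nonempty
    (fun v : V => d (Sum.inl v) (Sum.inr cstar)) with hM
  have hMle : ∀ v : V, d (Sum.inl v) (Sum.inr cstar) ≤ M := fun v =>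
    Finset.le_sup' (fun v : V => d (Sum.inl v) (Sum.inr cstar)) (Finset.mem_univ v)
  -- find voter u with d(u,c) ≤ d(u,cstar)
  obtain ⟨u, hu⟩ : ∃ u : V, d (Sum.inl u) (Sum.inr c) ≤ d (Sum.inl u) (Sum.inr cstar) := by
    rcases not_forall.mp (heff cstar) with ⟨u, hu⟩
    rcases lt_trichotomy (rank u c) (rank u cstar) with h | h | h
    · exact ⟨u, hcons u c cstar h⟩
    · have : c = cstar := (rank u).injective (Fin.ext (by exact_mod_cast congrArg Fin.val h))
      exact ⟨u, le_of_eq (by rw [this])⟩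
    · exact absurd h hu
  apply Finset.sup'_le
  intro v _
  have h1 : d (Sum.inl v) (Sum.inr c) ≤
      d (Sum.inl v) (Sum.inr cstar) + d (Sum.inr cstar) (Sum.inl u) +
        d (Sum.inl u) (Sum.inr c) := by
    calc d (Sum.inl v) (Sum.inr c)
        ≤ d (Sum.inl v) (Sum.inl u) + d (Sum.inl u) (Sum.inr c) := htri _ _ _
      _ ≤ (d (Sum.inl v) (Sum.inr cstar) + d (Sum.inr cstar) (Sum.inl u)) +
            d (Sum.inl u) (Sum.inr c) := by
          have := htri (Sum.inl v) (Sum.inr cstar) (Sum.inl u)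
          linarith
  have h2 : d (Sum.inr cstar) (Sum.inl u) = d (Sum.inl u) (Sum.inr cstar) := hsymm _ _
  have h3 := hMle v
  have h4 := hMle u
  linarith
end

section
/- If a candidate c in the k-approval veto core is Pareto-dominated by a candidate c′, then the k-approval score of c′ is zero. -/
/-- If a candidate `c` in the `k`-approval veto core is Pareto-dominated by `c'`,
then the `k`-approval score of `c'` is zero. -/
theorem dominated_core_member_apv_zero {V C : Type*} [Fintype V] {m : ℕ}
    (rank : V → C ≃ Fin m) (k : ℕ) (c c' : C)
    (hcore : HasPerfectMatching rank k c)
    (hdom : ParetoDominates rank c' c) :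
    apv rank k c' = 0 := by
  by_contra h
  obtain ⟨f, hf⟩ := hcore
  obtain ⟨i⟩ : Nonempty (Fin (apv rank k c')) := ⟨⟨0, Nat.pos_of_ne_zero h⟩⟩
  set p := f.symm ⟨c', i⟩ with hp
  have h1 := hf p
  rw [Equiv.apply_symm_apply] at h1
  exact absurd (hdom p.1) (not_lt.mpr h1)
end

section
/- Every candidate in the k-approval veto core has egalitarian metric distortion at most 3: if the k-domination graph of w has a perfect matching, then for every consistent metric d and every candidate c*, max_v d(v,w) ≤ 3 · max_v d(v,c*). -/
/-- Every candidate in the `k`-approval veto core has egalitarian metric distortion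
at most 3. -/
theorem core_egalitarian_distortion {V C : Type*} [Fintype V] [Nonempty V] {m : ℕ}
    (rank : V → C ≃ Fin m) (k : ℕ) (hk : 1 ≤ k)
    (d : V ⊕ C → V ⊕ C → ℝ)
    (hrefl : ∀ x, d x x = 0)
    (hsymm : ∀ x y, d x y = d y x)
    (htri : ∀ x y z, d x z ≤ d x y + d y z)
    (hcons : ∀ (v : V) (c c' : C), Prefers rank v c c' →
      d (Sum.inl v) (Sum.inr c) ≤ d (Sum.inl v) (Sum.inr c'))
    (w : C) (hcore : HasPerfectMatching rank k w)
    (cstar : C) :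
    Finset.univ.sup' Finset.univ_nonempty (fun v : V => d (Sum.inl v) (Sum.inr w)) ≤
      3 * Finset.univ.sup' Finset.univ_nonempty
        (fun v : V => d (Sum.inl v) (Sum.inr cstar)) := by
  set M := Finset.univ.sup' Finset.univ_nonempty
    (fun v : V => d (Sum.inl v) (Sum.inr cstar)) with hM
  have hle : ∀ x : V, d (Sum.inl x) (Sum.inr cstar) ≤ M := fun x =>
    Finset.le_sup' (fun v : V => d (Sum.inl v) (Sum.inr cstar)) (Finset.mem_univ x)
  -- reduce to a pointwise bound via an intermediate voter
  have key : ∀ v : V, d (Sum.inl v) (Sum.inr w) ≤ 3 * M := by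
    intro v
    obtain ⟨f, hf⟩ := hcore
    by_cases h : ∀ u : V, rank u cstar < rank u w
    · -- `cstar` Pareto-dominates `w`
      have hapv0 : ∀ u : V, ¬ ((rank u cstar : Fin m) : ℕ) < k := by
        intro u hu
        have hpos : 0 < apv rank k cstar :=
          Finset.card_pos.mpr ⟨u, Finset.mem_filter.mpr ⟨Finset.mem_univ u, hu⟩⟩
        set σ : Σ c : C, Fin (apv rank k c) := ⟨cstar, ⟨0, hpos⟩⟩ with hσ
        have hfs := hf (f.symm σ)
        rw [f.apply_symm_apply] at hfs
        exact absurd (h (f.symm σ).1) (not_lt.mpr hfs)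
      set p : V × Fin k := (v, ⟨0, hk⟩) with hp
      set c : C := (f p).1 with hc
      have hw : rank v w ≤ rank v c := hf p
      have hcpos : 0 < apv rank k c := (f p).2.pos
      obtain ⟨u, hu⟩ := Finset.card_pos.mp hcpos
      have hu' : ((rank u c : Fin m) : ℕ) < k := (Finset.mem_filter.mp hu).2
      have huc : d (Sum.inl u) (Sum.inr c) ≤ d (Sum.inl u) (Sum.inr cstar) := by
        apply hcons
        have hlt : ((rank u c : Fin m) : ℕ) < ((rank u cstar : Fin m) : ℕ) :=
          lt_of_lt_of_le hu' (not_lt.mp (hapv0 u))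
        exact hlt
      have hvw : d (Sum.inl v) (Sum.inr w) ≤ d (Sum.inl v) (Sum.inr c) := by
        rcases lt_or_eq_of_le hw with hlt | heq
        · exact hcons v w c hlt
        · rw [(rank v).injective heq]
      have t1 := htri (Sum.inl v) (Sum.inl u) (Sum.inr c)
      have t2 := htri (Sum.inl v : V ⊕ C) (Sum.inr cstar) (Sum.inl u)
      have hs := hsymm (Sum.inr cstar : V ⊕ C) (Sum.inl u)
      have h1 := hle v
      have h2 := hle u
      linarith
    · push_neg at h
      obtain ⟨u, hu⟩ := h
      have huw : d (Sum.inl u) (Sum.inr w) ≤ d (Sum.inl u) (Sum.inr cstar) := by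
        rcases lt_or_eq_of_le hu with hlt | heq
        · exact hcons u w cstar hlt
        · rw [(rank u).injective heq]
      have t1 := htri (Sum.inl v) (Sum.inl u) (Sum.inr w)
      have t2 := htri (Sum.inl v : V ⊕ C) (Sum.inr cstar) (Sum.inl u)
      have hs := hsymm (Sum.inr cstar : V ⊕ C) (Sum.inl u)
      have h1 := hle v
      have h2 := hle u
      linarith
  exact Finset.sup'_le _ _ fun v _ => key v
end

section
/- Every candidate in the k-approval veto core has α-percentile metric distortion at most 5 for all α ≥ k/(k+1): if w is in the k-approval veto core (equivalently, its k-domination graph has a perfect matching) and d is a metric consistent with the rankings, then cost^α_d(w) ≤ 5 · cost^α_d(c*) for every candidate c*, where cost^α_d(x) is the distance from x to its ⌊αn+1⌋-th closest voter. -/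
/-- The `α`-percentile cost of candidate `x`: the distance from `x` to its
`⌊αn+1⌋`-th closest voter. -/
noncomputable def percCost {V C : Type*} [Fintype V] (d : V ⊕ C → V ⊕ C → ℝ)
    (α : ℝ) (x : C) : ℝ :=
  ((Finset.univ.val.map fun v : V => d (Sum.inl v) (Sum.inr x)).sort (· ≤ ·)).getD
    ⌊α * (Fintype.card V)⌋₊ 0

lemma sorted_getD_le_iff : ∀ (L : List ℝ), L.Pairwise (· ≤ ·) → ∀ (B : ℝ) (i : ℕ),
    i < L.length → (L.getD i 0 ≤ B ↔ i < L.countP (fun x => decide (x ≤ B)))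
  | [], _, B, i, hi => by simp at hi
  | a :: t, hL, B, i, hi => by
    rw [List.pairwise_cons] at hL
    obtain ⟨ha, ht⟩ := hL
    cases i with
    | zero =>
      simp only [List.getD_cons_zero, List.countP_cons]
      constructor
      · intro hab
        simp [hab]
      · intro h
        by_contra hab
        have h0 : t.countP (fun x => decide (x ≤ B)) = 0 := by
          rw [List.countP_eq_zero]
          intro x hx
          simp only [decide_eq_true_eq]
          intro hxB
          exact hab (le_trans (ha x hx) hxB)
        simp [h0, hab] at h
    | succ i =>
      simp only [List.getD_cons_succ, List.countP_cons]
      have hit : i < t.length := by simpa using hi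
      have ihh := sorted_getD_le_iff t ht B i hit
      constructor
      · intro h
        have hi' := ihh.mp h
        have hmem : t.getD i 0 ∈ t := by
          rw [List.getD_eq_getElem t 0 hit]
          exact List.getElem_mem hit
        have haB : a ≤ B := le_trans (ha _ hmem) h
        have h1 : (if decide (a ≤ B) = true then 1 else 0) = 1 := by simp [haB]
        omega
      · intro h
        refine ihh.mpr ?_
        by_cases haB : a ≤ B <;> simp [haB] at h <;> omega

open Classical in
lemma percCost_le_iff {V C : Type*} [Fintype V] (d : V ⊕ C → V ⊕ C → ℝ) (α : ℝ) (x : C)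
    (ht : ⌊α * (Fintype.card V)⌋₊ < Fintype.card V) (B : ℝ) :
    percCost d α x ≤ B ↔
      ⌊α * (Fintype.card V)⌋₊ <
        (Finset.univ.filter fun v => d (Sum.inl v) (Sum.inr x) ≤ B).card := by
  classical
  set s : Multiset ℝ := Finset.univ.val.map fun v : V => d (Sum.inl v) (Sum.inr x) with hs
  have hlen : (s.sort (· ≤ ·)).length = Fintype.card V := by
    rw [Multiset.length_sort, hs, Multiset.card_map]
    rfl
  have hsorted : (s.sort (· ≤ ·)).Pairwise (· ≤ ·) := Multiset.pairwise_sort _ _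
  have h1 := sorted_getD_le_iff _ hsorted B ⌊α * (Fintype.card V)⌋₊ (by rw [hlen]; exact ht)
  have h2 : (s.sort (· ≤ ·)).countP (fun y => decide (y ≤ B)) =
      (Finset.univ.filter fun v => d (Sum.inl v) (Sum.inr x) ≤ B).card := by
    have h3 : Multiset.countP (fun y : ℝ => y ≤ B) ↑(s.sort (· ≤ ·)) =
        (s.sort (· ≤ ·)).countP (fun y => decide (y ≤ B)) :=
      Multiset.coe_countP (p := fun y : ℝ => y ≤ B) _
    rw [Multiset.sort_eq] at h3
    rw [← h3, hs, Multiset.countP_map]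
    rw [Finset.card_def, Finset.filter_val]
  rw [percCost, ← h2]
  exact h1

/-- Every candidate in the `k`-approval veto core has `α`-percentile metric distortion
at most 5 for all `α ≥ k/(k+1)`. -/
theorem core_percentile_distortion {V C : Type*} [Fintype V] [Nonempty V] {m : ℕ}
    (rank : V → C ≃ Fin m) (k : ℕ) (hk : 1 ≤ k)
    (α : ℝ) (hα : (k : ℝ) / (k + 1) ≤ α) (hα1 : α < 1)
    (d : V ⊕ C → V ⊕ C → ℝ)
    (hrefl : ∀ x, d x x = 0)
    (hsymm : ∀ x y, d x y = d y x)
    (htri : ∀ x y z, d x z ≤ d x y + d y z)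
    (hcons : ∀ (v : V) (c c' : C), Prefers rank v c c' →
      d (Sum.inl v) (Sum.inr c) ≤ d (Sum.inl v) (Sum.inr c'))
    (w : C) (hcore : HasPerfectMatching rank k w)
    (cstar : C) :
    percCost d α w ≤ 5 * percCost d α cstar := by
  classical
  obtain ⟨f, hf⟩ := hcore
  have hn1 : 1 ≤ Fintype.card V := Fintype.card_pos
  have hnR : (0 : ℝ) < Fintype.card V := by exact_mod_cast hn1
  have hm0 : 0 < m := Fin.pos (rank (Classical.arbitrary V) w)
  haveI : NeZero m := ⟨hm0.ne'⟩
  haveI : Fintype C := Fintype.ofEquiv (Fin m) (rank (Classical.arbitrary V)).symm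
  have hd0 : ∀ x y, 0 ≤ d x y := by
    intro x y
    have h1 := htri x y x
    rw [hrefl, hsymm y x] at h1
    linarith
  have hα0 : (0 : ℝ) ≤ α := le_trans (by positivity) hα
  have hαn0 : (0 : ℝ) ≤ α * Fintype.card V := by positivity
  have ht : ⌊α * (Fintype.card V)⌋₊ < Fintype.card V := by
    rw [Nat.floor_lt hαn0]
    nlinarith
  set t := ⌊α * (Fintype.card V)⌋₊ with htdef
  set s := percCost d α cstar with hsdef
  -- basic characterization facts
  have hsc : t < (Finset.univ.filter fun v : V => d (Sum.inl v) (Sum.inr cstar) ≤ s).card :=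
    (percCost_le_iff d α cstar ht s).mp le_rfl
  have hs0 : 0 ≤ s := by
    by_contra hcon
    push_neg at hcon
    have hempty : (Finset.univ.filter fun v : V => d (Sum.inl v) (Sum.inr cstar) ≤ s) = ∅ := by
      refine Finset.filter_eq_empty_iff.mpr ?_
      intro v _
      push_neg
      exact lt_of_lt_of_le hcon (hd0 _ _)
    rw [hempty] at hsc
    simp at hsc
  set D := d (Sum.inr w) (Sum.inr (cstar : C)) with hDdef
  by_cases hD : D ≤ 4 * s
  · -- easy case: r ≤ s + D ≤ 5 s
    have hr : percCost d α w ≤ s + D := by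
      rw [percCost_le_iff d α w ht (s + D)]
      refine lt_of_lt_of_le hsc (Finset.card_le_card ?_)
      intro v hv
      rw [Finset.mem_filter] at hv ⊢
      refine ⟨Finset.mem_univ v, ?_⟩
      have h1 := htri (Sum.inl v) (Sum.inr cstar) (Sum.inr w)
      have h2 : d (Sum.inr (cstar : C)) (Sum.inr w) = D := hsymm _ _
      linarith [hv.2]
    linarith
  · exfalso
    push_neg at hD
    have hDpos : 0 < D := by linarith
    set V' : Finset V := Finset.univ.filter (fun v => d (Sum.inl v) (Sum.inr cstar) < D / 4)
      with hV'def
    have hsub : t < V'.card := by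
      refine lt_of_lt_of_le hsc (Finset.card_le_card ?_)
      intro v hv
      rw [Finset.mem_filter] at hv ⊢
      exact ⟨hv.1, lt_of_le_of_lt hv.2 (by linarith)⟩
    -- top choice of each voter
    set top : V → C := fun v => (rank v).symm 0 with htopdef
    have htop_le : ∀ (v : V) (c : C),
        d (Sum.inl v) (Sum.inr (top v)) ≤ d (Sum.inl v) (Sum.inr c) := by
      intro v c
      by_cases hceq : top v = c
      · rw [hceq]
      · refine hcons v _ _ ?_
        show rank v (top v) < rank v c
        have h0 : rank v (top v) = 0 := (rank v).apply_symm_apply 0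
        rw [h0]
        refine (Fin.pos_iff_ne_zero' _).mpr ?_
        intro hc0
        exact hceq (by rw [htopdef]; simp only; rw [← hc0, Equiv.symm_apply_apply])
    have hw_le : ∀ p : V × Fin k,
        d (Sum.inl p.1) (Sum.inr w) ≤ d (Sum.inl p.1) (Sum.inr (f p).1) := by
      intro p
      by_cases hceq : w = (f p).1
      · rw [← hceq]
      · refine hcons p.1 _ _ ?_
        show rank p.1 w < rank p.1 (f p).1
        exact lt_of_le_of_ne (hf p) (fun h => hceq ((rank p.1).injective h))
    -- distance facts
    have hfar : ∀ v ∈ V', 3 / 4 * D < d (Sum.inl v) (Sum.inr w) := by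
      intro v hv
      rw [hV'def, Finset.mem_filter] at hv
      have h1 := htri (Sum.inr w) (Sum.inl v) (Sum.inr (cstar : C))
      have h2 : d (Sum.inr w) (Sum.inl v) = d (Sum.inl v) (Sum.inr w) := hsymm _ _
      linarith [hv.2]
    have hnear : ∀ v ∈ V', ∀ v' ∈ V',
        d (Sum.inl v) (Sum.inr (top v')) < 3 / 4 * D := by
      intro v hv v' hv'
      rw [hV'def, Finset.mem_filter] at hv hv'
      have h1 := htri (Sum.inl v) (Sum.inr (cstar : C)) (Sum.inr (top v'))
      have h2 := htri (Sum.inr (cstar : C)) (Sum.inl v') (Sum.inr (top v'))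
      have h3 := htop_le v' cstar
      have h4 : d (Sum.inr (cstar : C)) (Sum.inl v') = d (Sum.inl v') (Sum.inr cstar) :=
        hsymm _ _
      linarith [hv.2, hv'.2]
    -- the matched candidate of a voter in V' is not a top choice of a voter in V'
    have hnotop : ∀ (v : V), v ∈ V' → ∀ (i : Fin k) (v' : V), v' ∈ V' →
        (f (v, i)).1 ≠ top v' := by
      intro v hv i v' hv' heq
      have h1 := hw_le (v, i)
      have h2 := hfar v hv
      have h3 := hnear v hv v' hv'
      rw [heq] at h1
      linarith
    -- counting via an injection
    have happrove : ∀ v : V, v ∈ Finset.univ.filter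
        (fun u => ((rank u (top v) : Fin m) : ℕ) < k) := by
      intro v
      rw [Finset.mem_filter]
      refine ⟨Finset.mem_univ v, ?_⟩
      have h0 : rank v (top v) = 0 := (rank v).apply_symm_apply 0
      rw [h0]
      simpa using (by omega : 0 < k)
    -- counting
    set T : Finset C := V'.image top with hTdef
    set P : Finset (Σ c : C, Fin (apv rank k c)) :=
      T.sigma (fun c => (Finset.univ : Finset (Fin (apv rank k c)))) with hPdef
    have hVP : V'.card ≤ P.card := by
      have h5 : V' ⊆ T.biUnion
          (fun c => Finset.univ.filter (fun u => ((rank u c : Fin m) : ℕ) < k)) := by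
        intro v hv
        rw [Finset.mem_biUnion]
        exact ⟨top v, Finset.mem_image_of_mem top hv, happrove v⟩
      calc V'.card ≤ _ := Finset.card_le_card h5
        _ ≤ ∑ c ∈ T, (Finset.univ.filter
            (fun u => ((rank u c : Fin m) : ℕ) < k)).card := Finset.card_biUnion_le
        _ = P.card := by
          rw [hPdef, Finset.card_sigma]
          refine Finset.sum_congr rfl (fun c _ => ?_)
          rw [Finset.card_univ, Fintype.card_fin]
          rfl
    have hPV : P.card ≤ V'ᶜ.card * k := by
      have himg : P.image f.symm ⊆ V'ᶜ ×ˢ (Finset.univ : Finset (Fin k)) := by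
        intro p hp
        rw [Finset.mem_image] at hp
        obtain ⟨x, hx, rfl⟩ := hp
        rw [hPdef, Finset.mem_sigma] at hx
        rw [Finset.mem_product]
        refine ⟨Finset.mem_compl.mpr ?_, Finset.mem_univ _⟩
        intro hmem
        obtain ⟨v', hv', htopv'⟩ := Finset.mem_image.mp hx.1
        refine hnotop (f.symm x).1 hmem (f.symm x).2 v' hv' ?_
        have hfx : f ((f.symm x).1, (f.symm x).2) = x := by
          rw [show ((f.symm x).1, (f.symm x).2) = f.symm x from rfl, f.apply_symm_apply]
        rw [hfx, ← htopv']
      calc P.card = (P.image f.symm).card :=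
            (Finset.card_image_of_injective P f.symm.injective).symm
        _ ≤ (V'ᶜ ×ˢ (Finset.univ : Finset (Fin k))).card := Finset.card_le_card himg
        _ = V'ᶜ.card * k := by rw [Finset.card_product, Finset.card_univ, Fintype.card_fin]
    have hVk : V'.card ≤ V'ᶜ.card * k := le_trans hVP hPV
    -- arithmetic contradiction
    have hV'n : V'.card ≤ Fintype.card V := Finset.card_le_univ V'
    have hV'le : (V'.card : ℝ) ≤ ((Fintype.card V : ℝ) - V'.card) * k := by
      have hc : (V'ᶜ.card : ℝ) = (Fintype.card V : ℝ) - V'.card := by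
        rw [Finset.card_compl]
        push_cast [Nat.cast_sub hV'n]
        ring
      have := hVk
      calc (V'.card : ℝ) ≤ (V'ᶜ.card : ℝ) * k := by exact_mod_cast this
        _ = ((Fintype.card V : ℝ) - V'.card) * k := by rw [hc]
    have htV' : (t : ℝ) + 1 ≤ V'.card := by exact_mod_cast hsub
    have hfl : α * (Fintype.card V) < (t : ℝ) + 1 := by
      exact_mod_cast Nat.lt_floor_add_one (α * (Fintype.card V))
    have hk1 : (k : ℝ) ≤ α * (k + 1) := by
      rw [div_le_iff₀ (by positivity)] at hα
      linarith
    have hk0 : (1 : ℝ) ≤ k := by exact_mod_cast hk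
    have e1 : (k : ℝ) * Fintype.card V ≤ α * (k + 1) * Fintype.card V :=
      mul_le_mul_of_nonneg_right hk1 hnR.le
    have e2 : α * Fintype.card V * (k + 1) < ((t : ℝ) + 1) * (k + 1) :=
      mul_lt_mul_of_pos_right hfl (by positivity)
    have e3 : ((t : ℝ) + 1) * (k + 1) ≤ (V'.card : ℝ) * (k + 1) :=
      mul_le_mul_of_nonneg_right htV' (by positivity)
    nlinarith [e1, e2, e3, hV'le]
end

section
/- For every α ∈ [1/2, k/(k+1)) with k ≥ 2, there exists an election in which the candidate c* optimal under some consistent metric has α-percentile cost 0 while every candidate in the k-approval veto core has α-percentile cost 1; hence the α-percentile distortion of the k-approval veto core is unbounded. Concretely: with k+1 candidates c_1,…,c_k,c* and n voters (n odd, αn not an integer, ⌈αn⌉ < nk/(k+1)), partition voters into T of size n−⌈αn⌉ ranking c* last and T̄ of size ⌈αn⌉ ranking c* first; then c* is k-blocked by T with witness set {c_1,…,c_k}, so the k-approval veto core is contained in {c_1,…,c_k}, and under the metric where d(v,c*)=1, d(v,c_i)=0 for v∈T and d(v,c*)=0, d(v,c_i)=1 for v∈T̄, we have cost^α(c*)=0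 and cost^α(c_i)=1 for all i. -/
lemma aux_getD_replicate (m : ℕ) (x : ℝ) (i : ℕ) (h : i < m) :
    (List.replicate m x).getD i 0 = x := by
  rw [List.getD_eq_getElem _ _ (by simpa using h)]; simp

lemma aux_sorted (s m : ℕ) (x y : ℝ) (h : x ≤ y) :
    List.Pairwise (· ≤ ·) (List.replicate s x ++ List.replicate m y) := by
  rw [List.pairwise_append]
  refine ⟨List.pairwise_replicate.2 ?_, List.pairwise_replicate.2 ?_, ?_⟩ <;> simp_all

lemma aux_ofFn (n s : ℕ) (hsn : s ≤ n) (x y : ℝ) :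
    List.ofFn (fun v : Fin n => if v.val < s then x else y)
      = List.replicate s x ++ List.replicate (n - s) y := by
  obtain ⟨m, rfl⟩ : ∃ m, n = s + m := ⟨n - s, by omega⟩
  rw [List.ofFn_eq_map]
  have h1 : (fun v : Fin (s + m) => if v.val < s then x else y)
      = (fun i : ℕ => if i < s then x else y) ∘ Fin.val := rfl
  rw [h1, ← List.map_map, (List.ext_getElem (by simp) (by simp) :
      (List.finRange (s + m)).map Fin.val = List.range (s + m)), List.range_add, List.map_append,
    List.map_map, Nat.add_sub_cancel_left]
  congr 1
  · rw [List.eq_replicate_iff]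
    refine ⟨by simp, ?_⟩
    intro b hb
    simp only [List.mem_map, List.mem_range] at hb
    obtain ⟨i, hi, rfl⟩ := hb
    simp [hi]
  · rw [List.eq_replicate_iff]
    refine ⟨by simp, ?_⟩
    intro b hb
    simp only [List.mem_map, List.mem_range, Function.comp] at hb
    obtain ⟨i, hi, rfl⟩ := hb
    simp

lemma aux_sort1 (n s : ℕ) (hsn : s ≤ n) (x y : ℝ) (hxy : x ≤ y) :
    ((Finset.univ.val.map fun v : Fin n => if v.val < s then x else y).sort (· ≤ ·))
      = List.replicate s x ++ List.replicate (n - s) y := by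
  refine List.Perm.eq_of_pairwise' (Multiset.pairwise_sort _ _) (aux_sorted _ _ _ _ hxy) ?_
  rw [← Multiset.coe_eq_coe, Multiset.sort_eq, Fin.univ_val_map, aux_ofFn n s hsn]

lemma aux_sort2 (n s : ℕ) (hsn : s ≤ n) (x y : ℝ) (hxy : x ≤ y) :
    ((Finset.univ.val.map fun v : Fin n => if v.val < s then y else x).sort (· ≤ ·))
      = List.replicate (n - s) x ++ List.replicate s y := by
  refine List.Perm.eq_of_pairwise' (Multiset.pairwise_sort _ _) (aux_sorted _ _ _ _ hxy) ?_
  rw [← Multiset.coe_eq_coe, Multiset.sort_eq, Fin.univ_val_map, aux_ofFn n s hsn]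
  exact Multiset.coe_eq_coe.2 List.perm_append_comm

lemma aux_card_lt (n s : ℕ) (h : s ≤ n) :
    (Finset.univ.filter fun v : Fin n => v.val < s).card = s := by
  have : (Finset.univ.filter fun v : Fin n => v.val < s)
      = Finset.univ.map (Fin.castLEEmb h) := by
    ext v
    simp only [Finset.mem_filter, Finset.mem_univ, true_and, Finset.mem_map]
    constructor
    · intro hv; exact ⟨⟨v, hv⟩, by ext; simp [Fin.castLEEmb]⟩
    · rintro ⟨a, rfl⟩; simpa [Fin.castLEEmb] using a.isLt
  rw [this, Finset.card_map, Finset.card_univ, Fintype.card_fin]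

/-- For every `α ∈ [1/2, k/(k+1))` with `k ≥ 2`, there is an election and a consistent
pseudometric under which some candidate `c*` has `α`-percentile cost 0 while every
candidate of the `k`-approval veto core has `α`-percentile cost 1; hence the
`α`-percentile distortion of the `k`-approval veto core is unbounded. -/
theorem core_percentile_unbounded (k : ℕ) (hk : 2 ≤ k)
    (α : ℝ) (hα1 : 1 / 2 ≤ α) (hα2 : α < (k : ℝ) / (k + 1)) :
    ∃ (n : ℕ) (_ : 0 < n) (rank : Fin n → Fin (k + 1) ≃ Fin (k + 1))
      (d : Fin n ⊕ Fin (k + 1) → Fin n ⊕ Fin (k + 1) → ℝ),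
      (∀ x, d x x = 0) ∧
      (∀ x y, d x y = d y x) ∧
      (∀ x y z, d x z ≤ d x y + d y z) ∧
      (∀ (v : Fin n) (c c' : Fin (k + 1)), Prefers rank v c c' →
        d (Sum.inl v) (Sum.inr c) ≤ d (Sum.inl v) (Sum.inr c')) ∧
      ∃ cstar : Fin (k + 1),
        percCost d α cstar = 0 ∧
        ∀ w : Fin (k + 1),
          (∀ (T : Finset (Fin n)) (S : Finset (Fin (k + 1))), ¬ KBlocks rank k T S w) →
          percCost d α w = 1 := by
  have hk0 : (0:ℝ) < k := by exact_mod_cast (by omega : 0 < k)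
  have hk1 : (0:ℝ) < (k:ℝ) + 1 := by linarith
  have hα0 : (0:ℝ) ≤ α := by linarith
  have hε : 0 < (k:ℝ)/(k+1) - α := by linarith
  obtain ⟨n, hn⟩ := exists_nat_gt (((k:ℝ)+1) / ((k:ℝ)/(k+1) - α))
  have hn0 : 0 < n := by
    have h1 : (0:ℝ) < ((k:ℝ)+1) / ((k:ℝ)/(k+1) - α) := div_pos hk1 hε
    exact_mod_cast h1.trans hn
  have hn0R : (0:ℝ) < n := by exact_mod_cast hn0
  set t := ⌊α * n⌋₊ with ht
  set s := t + 1 with hs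
  have htle : (t:ℝ) ≤ α * n := Nat.floor_le (by positivity)
  have hεn : ((k:ℝ)+1) < n * ((k:ℝ)/(k+1) - α) := by
    rw [div_lt_iff₀ hε] at hn; linarith
  have hreal : ((k:ℝ)+1) * s < k * n := by
    have e1 : ((k:ℝ)+1) * (t:ℝ) ≤ (k+1) * (α*n) := mul_le_mul_of_nonneg_left htle hk1.le
    have e2 : ((k:ℝ)+1) * ((k:ℝ)+1) < (k+1) * (n * ((k:ℝ)/(k+1) - α)) :=
      (mul_lt_mul_iff_right₀ hk1).2 hεn
    have e3 : ((k:ℝ)+1) * (n * ((k:ℝ)/(k+1) - α)) = k * n - (k+1)*(α*n) := by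
      field_simp
    have e4 : ((k:ℝ)+1) ≤ ((k:ℝ)+1)*((k:ℝ)+1) := by nlinarith
    push_cast [hs]
    nlinarith [e1, e2, e3, e4]
  have hks : (k+1) * s < k * n := by exact_mod_cast hreal
  have hsn : s ≤ n := by
    have h1 : (k+1) * s < (k+1) * n :=
      lt_of_lt_of_le hks (Nat.mul_le_mul_right n (by omega))
    exact le_of_lt (Nat.lt_of_mul_lt_mul_left h1)
  have hα1' : α < 1 := hα2.trans_le (by rw [div_le_one hk1]; linarith)
  have htn : t < n := by
    rw [ht, Nat.floor_lt (by positivity)]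
    nlinarith
  have hhalf : n ≤ s + t := by
    have h2 : ((n:ℝ)) / ((2:ℕ):ℝ) ≤ α * n := by push_cast; nlinarith
    have h3 : n / 2 ≤ t := by
      have h4 := Nat.floor_mono h2
      rwa [Nat.floor_div_natCast, Nat.floor_natCast] at h4
    omega
  set rank : Fin n → Fin (k+1) ≃ Fin (k+1) :=
    fun v => if v.val < s then Equiv.swap (Fin.last k) 0 else Equiv.refl _ with hrank
  set f : (Fin n ⊕ Fin (k+1)) → ℝ :=
    Sum.elim (fun v : Fin n => if v.val < s then (1:ℝ) else 0)
      (fun c : Fin (k+1) => if c = Fin.last k then (1:ℝ) else 0) with hfdef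
  refine ⟨n, hn0, rank, fun a b => |f a - f b|, by simp, fun a b => abs_sub_comm _ _,
    fun a b c => abs_sub_le _ _ _, ?_, ?_⟩
  · -- consistency
    intro v c c' hpref
    simp only [Prefers, hrank] at hpref
    by_cases hv : v.val < s
    · rw [if_pos hv] at hpref
      by_cases hc' : c' = Fin.last k
      · subst hc'
        rw [Equiv.swap_apply_left] at hpref
        exact absurd hpref (Fin.not_lt_zero _)
      · by_cases hc : c = Fin.last k <;>
          simp [hfdef, hv, hc, hc'] <;> norm_num
    · rw [if_neg hv] at hpref
      simp only [Equiv.refl_apply] at hpref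
      have hc : c ≠ Fin.last k := by
        rintro rfl
        exact absurd hpref (not_lt.2 (Fin.le_last _))
      by_cases hc' : c' = Fin.last k <;>
        simp [hfdef, hv, hc, hc'] <;> norm_num
  · refine ⟨Fin.last k, ?_, ?_⟩
    · -- percCost of cstar is 0
      have hfun : (fun v : Fin n => |f (Sum.inl v) - f (Sum.inr (Fin.last k))|)
          = fun v : Fin n => if v.val < s then (0:ℝ) else 1 := by
        funext v
        simp only [hfdef, Sum.elim_inl, Sum.elim_inr, if_pos rfl]
        split <;> norm_num
      have hmap : (Finset.univ.val.map fun v : Fin n =>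
          |f (Sum.inl v) - f (Sum.inr (Fin.last k))|)
          = Finset.univ.val.map (fun v : Fin n => if v.val < s then (0:ℝ) else 1) := by
        rw [hfun]
      simp only [percCost, Fintype.card_fin]
      rw [← ht, hmap, aux_sort1 n s hsn 0 1 (by norm_num)]
      rw [List.getD_append _ _ _ _ (by rw [List.length_replicate]; omega)]
      exact aux_getD_replicate s 0 t (by omega)
    · intro w hw
      -- cstar is k-blocked
      have hcardT : (Finset.univ.filter fun v : Fin n => ¬ v.val < s).card = n - s := by
        have h1 := Finset.card_filter_add_card_filter_not
          (s := (Finset.univ : Finset (Fin n))) (p := fun v : Fin n => v.val < s)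
        rw [aux_card_lt n s hsn, Finset.card_univ, Fintype.card_fin] at h1
        omega
      have hapvlast : apv rank k (Fin.last k) = s := by
        unfold apv
        rw [← aux_card_lt n s hsn]
        congr 1
        apply Finset.filter_congr
        intro v _
        simp only [hrank]
        by_cases hv : v.val < s
        · simp only [if_pos hv, Equiv.swap_apply_left]
          simp [hv]
          omega
        · simp [hv, Fin.val_last]
      have hsumall : ∑ c : Fin (k+1), apv rank k c = n * k := by
        unfold apv
        simp only [Finset.card_filter]
        rw [Finset.sum_comm]
        have hrow : ∀ v : Fin n,
            (∑ c : Fin (k+1), if (((rank v) c : Fin (k+1)) : ℕ) < k then 1 else 0) = k := by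
          intro v
          rw [Equiv.sum_comp (rank v) (fun j : Fin (k+1) => if (j:ℕ) < k then 1 else 0)]
          rw [← Finset.card_filter, aux_card_lt (k+1) k (by omega)]
        simp only [hrow]
        rw [Finset.sum_const, Finset.card_univ, Fintype.card_fin, smul_eq_mul]
      have hsumS : ∑ c ∈ Finset.univ.erase (Fin.last k), apv rank k c = n * k - s := by
        have h1 := Finset.sum_erase_add Finset.univ (apv rank k)
          (Finset.mem_univ (Fin.last k))
        rw [hapvlast, hsumall] at h1
        omega
      have hblock : KBlocks rank k (Finset.univ.filter fun v : Fin n => ¬ v.val < s)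
          (Finset.univ.erase (Fin.last k)) (Fin.last k) := by
        constructor
        · intro v hv c hc
          simp only [Finset.mem_filter] at hv
          have hc' : c ≠ Fin.last k := (Finset.mem_erase.1 hc).1
          simp only [Prefers, hrank, if_neg hv.2, Equiv.refl_apply]
          rw [Fin.lt_def, Fin.val_last]
          by_contra hcon
          exact hc' (Fin.ext (by have := c.isLt; simp [Fin.val_last]; omega))
        · have hcast : (∑ c ∈ Finset.univ.erase (Fin.last k), (apv rank k c : ℚ))
              = ((n*k - s : ℕ) : ℚ) := by
            rw [← Nat.cast_sum, hsumS]
          rw [hcardT, hcast]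
          simp only [Fintype.card_fin]
          have hsnk : s ≤ n * k := le_trans hsn (Nat.le_mul_of_pos_right n (by omega))
          have h0n : (0:ℚ) < n := by exact_mod_cast hn0
          have h0k : (0:ℚ) < k := by exact_mod_cast (by omega : 0 < k)
          have hksQ : ((k:ℚ)+1) * s < k * n := by exact_mod_cast hks
          rw [gt_iff_lt]
          push_cast [hs] at hksQ
          rw [hs] at hsn hsnk
          push_cast [hsn, hsnk, hs]
          rw [show (1:ℚ) - ((n:ℚ)*(k:ℚ) - ((t:ℚ)+1))/((n:ℚ)*(k:ℚ))
              = ((t:ℚ)+1)/((n:ℚ)*(k:ℚ)) by field_simp; ring]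
          rw [div_lt_div_iff₀ (by positivity) h0n]
          nlinarith [mul_pos h0n (sub_pos.2 hksQ)]
      have hwne : w ≠ Fin.last k := by
        rintro rfl
        exact hw _ _ hblock
      have hfun2 : (fun v : Fin n => |f (Sum.inl v) - f (Sum.inr w)|)
          = fun v : Fin n => if v.val < s then (1:ℝ) else 0 := by
        funext v
        simp only [hfdef, Sum.elim_inl, Sum.elim_inr, if_neg hwne]
        split <;> norm_num
      have hmap2 : (Finset.univ.val.map fun v : Fin n => |f (Sum.inl v) - f (Sum.inr w)|)
          = Finset.univ.val.map (fun v : Fin n => if v.val < s then (1:ℝ) else 0) := by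
        rw [hfun2]
      simp only [percCost, Fintype.card_fin]
      rw [← ht, hmap2, aux_sort2 n s hsn 0 1 (by norm_num)]
      rw [List.getD_append_right _ _ _ _ (by rw [List.length_replicate]; omega)]
      rw [List.length_replicate]
      exact aux_getD_replicate s 1 (t - (n - s)) (by omega)
end

section
/- In the election with k+1 voters v_1,…,v_{k+1} and candidates A ∪ B where A = {c_1,…,c_{k+1}}, B = {c_{k+2},…,c_m} (k < m), every voter ranks all of A above all of B, and v_i ranks c_i last within A, every candidate in A belongs to the k-approval veto core. -/
lemma card_filter_val_lt {m : ℕ} (t : ℕ) (ht : t ≤ m) :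
    (Finset.univ.filter (fun x : Fin m => x.val < t)).card = t := by
  have h : (Finset.univ.filter fun x : Fin m => x.val < t)
      = Finset.image (Fin.castLE ht) Finset.univ := by
    ext x
    simp only [Finset.mem_filter, Finset.mem_image, Finset.mem_univ, true_and]
    constructor
    · intro hx; exact ⟨⟨x.val, hx⟩, Fin.ext rfl⟩
    · rintro ⟨y, rfl⟩; exact y.isLt
  rw [h, Finset.card_image_of_injective _ (Fin.castLE_injective ht)]
  simp

lemma filter_equiv_card {α : Type*} [Fintype α] [DecidableEq α] (e : α ≃ α) (p : α → Prop)
    [DecidablePred p] :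
    (Finset.univ.filter fun x => p (e x)).card = (Finset.univ.filter p).card := by
  have h : (Finset.univ.filter fun x => p (e x)) = (Finset.univ.filter p).image e.symm := by
    ext x
    simp only [Finset.mem_filter, Finset.mem_image, Finset.mem_univ, true_and,
      Equiv.symm_apply_eq]
    constructor
    · intro hx; exact ⟨e x, hx, rfl⟩
    · rintro ⟨y, hy, rfl⟩; simpa using hy
  rw [h, Finset.card_image_of_injective _ e.symm.injective]

/-- In the election with `k+1` voters and candidates `A ∪ B`, where
`A = {c_0, …, c_k}` (the candidates of index `< k+1`), every voter ranks all of `A`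
above all of `B`, and voter `v_i` ranks `c_i` last within `A`, every candidate of `A`
belongs to the `k`-approval veto core. -/
theorem A_subset_core (k m : ℕ) (hkm : k < m) (hk : 1 ≤ k)
    (rank : Fin (k + 1) → Fin m ≃ Fin m)
    (hAB : ∀ (v : Fin (k + 1)) (a b : Fin m), a.val < k + 1 → k + 1 ≤ b.val →
      Prefers rank v a b)
    (hbot : ∀ (i : Fin (k + 1)) (a : Fin m), a.val < k + 1 → a.val ≠ i.val →
      Prefers rank i a ⟨i.val, lt_of_lt_of_le i.isLt (by omega)⟩)
    (a : Fin m) (ha : a.val < k + 1) :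
    ∀ (T : Finset (Fin (k + 1))) (S : Finset (Fin m)), ¬ KBlocks rank k T S a := by
  have hk1m : k + 1 ≤ m := hkm
  have hkm' : k ≤ m := le_of_lt hkm
  -- candidates of A
  set Afin : Finset (Fin m) := Finset.univ.filter (fun x : Fin m => x.val < k + 1) with hAfin
  have hAcard : Afin.card = k + 1 := card_filter_val_lt (k + 1) hk1m
  -- every A-candidate ranks ≤ k for every voter
  have hrankA : ∀ (v : Fin (k + 1)) (c : Fin m), c.val < k + 1 → ((rank v c : Fin m) : ℕ) ≤ k := by
    intro v c hc
    by_contra hcon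
    push_neg at hcon
    -- the k+1 candidates in top k+1 positions are all in Afin \ {c}
    set P : Finset (Fin m) := Finset.univ.filter (fun x : Fin m => ((rank v x : Fin m) : ℕ) < k + 1) with hP
    have hPcard : P.card = k + 1 := by
      rw [hP, filter_equiv_card (rank v) (fun y : Fin m => y.val < k + 1),
        card_filter_val_lt (k + 1) hk1m]
    have hsub : P ⊆ Afin.erase c := by
      intro x hx
      rw [hP, Finset.mem_filter] at hx
      have hxA : x.val < k + 1 := by
        by_contra hxB
        push_neg at hxB
        have := hAB v c x hc hxB
        unfold Prefers at this
        omega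
      refine Finset.mem_erase.2 ⟨?_, by simp [hAfin]; omega⟩
      intro hxc
      subst hxc
      omega
    have := Finset.card_le_card hsub
    rw [hPcard] at this
    have := Finset.card_erase_le (s := Afin) (a := c)
    have h2 := Finset.card_le_card hsub
    rw [hPcard, Finset.card_erase_of_mem (by simp [hAfin]; omega), hAcard] at h2
    omega
  -- the bottom A-candidate of voter v is ranked ≥ k
  have hrankbot : ∀ (v : Fin (k + 1)),
      k ≤ ((rank v ⟨v.val, lt_of_lt_of_le v.isLt hk1m⟩ : Fin m) : ℕ) := by
    intro v
    set bv : Fin m := ⟨v.val, lt_of_lt_of_le v.isLt hk1m⟩ with hbv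
    set Q : Finset (Fin m) := (Afin.erase bv).image (rank v) with hQ
    have hQcard : Q.card = k := by
      rw [hQ, Finset.card_image_of_injective _ (rank v).injective,
        Finset.card_erase_of_mem (by simp [hAfin, hbv]; have := v.isLt; omega), hAcard]
      omega
    have hsub : Q ⊆ Finset.univ.filter (fun y : Fin m => y.val < ((rank v bv : Fin m) : ℕ)) := by
      intro y hy
      rw [hQ, Finset.mem_image] at hy
      obtain ⟨x, hx, rfl⟩ := hy
      rw [Finset.mem_erase, hAfin, Finset.mem_filter] at hx
      have hne : x.val ≠ v.val := by
        intro h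
        exact hx.1 (Fin.ext h)
      have := hbot v x hx.2.2 hne
      unfold Prefers at this
      simp only [Finset.mem_filter, Finset.mem_univ, true_and]
      exact this
    have := Finset.card_le_card hsub
    rw [hQcard, card_filter_val_lt _ (le_of_lt (rank v bv).isLt)] at this
    exact this
  -- apv of A-candidates is k
  have hapv : ∀ c : Fin m, c.val < k + 1 → apv rank k c = k := by
    intro c hc
    unfold apv
    have heq : (Finset.univ.filter fun v : Fin (k + 1) => ((rank v c : Fin m) : ℕ) < k)
        = Finset.univ.erase ⟨c.val, hc⟩ := by
      ext v
      simp only [Finset.mem_filter, Finset.mem_univ, true_and, Finset.mem_erase, and_true]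
      constructor
      · intro hv hvc
        have hb : c = (⟨v.val, lt_of_lt_of_le v.isLt hk1m⟩ : Fin m) := by
          subst hvc; exact Fin.ext rfl
        rw [hb] at hv
        have := hrankbot v
        omega
      · intro hv
        have hne : c.val ≠ v.val := by
          intro h
          exact hv (Fin.ext h.symm)
        have h1 := hbot v c hc hne
        unfold Prefers at h1
        have h2 := hrankA v ⟨v.val, lt_of_lt_of_le v.isLt hk1m⟩ v.isLt
        omega
    rw [heq, Finset.card_erase_of_mem (Finset.mem_univ _)]
    simp
  -- apv of each voter's approvals: for total sum bound
  have htotal : ∑ c : Fin m, apv rank k c = (k + 1) * k := by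
    unfold apv
    have : ∀ c : Fin m, (Finset.univ.filter fun v : Fin (k + 1) => ((rank v c : Fin m) : ℕ) < k).card
        = ∑ v : Fin (k + 1), if ((rank v c : Fin m) : ℕ) < k then 1 else 0 := by
      intro c; rw [Finset.card_filter]
    simp_rw [this]
    rw [Finset.sum_comm]
    have hinner : ∀ v : Fin (k + 1),
        (∑ c : Fin m, if ((rank v c : Fin m) : ℕ) < k then 1 else 0) = k := by
      intro v
      rw [← Finset.card_filter]
      rw [filter_equiv_card (rank v) (fun y : Fin m => y.val < k), card_filter_val_lt k hkm']
    simp_rw [hinner]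
    simp [mul_comm]
  -- main argument
  intro T S hblock
  obtain ⟨hpref, hineq⟩ := hblock
  simp only [Fintype.card_fin] at hineq
  have hkQ : (0 : ℚ) < k := by exact_mod_cast hk
  have hk1Q : (0 : ℚ) < (k + 1 : ℕ) := by positivity
  rcases Finset.eq_empty_or_nonempty T with hT | ⟨v, hv⟩
  · -- empty coalition: RHS nonneg
    subst hT
    simp only [Finset.card_empty, Nat.cast_zero, zero_div] at hineq
    have hsum : ∑ c ∈ S, (apv rank k c : ℚ) ≤ ((k + 1) * k : ℕ) := by
      have h1 : ∑ c ∈ S, apv rank k c ≤ ∑ c : Fin m, apv rank k c :=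
        Finset.sum_le_sum_of_subset (Finset.subset_univ S)
      rw [htotal] at h1
      push_cast
      exact_mod_cast h1
    have hden : (0 : ℚ) < ((k + 1 : ℕ) : ℚ) * k := by positivity
    have : (∑ c ∈ S, (apv rank k c : ℚ)) / (((k + 1 : ℕ) : ℚ) * k) ≤ 1 := by
      rw [div_le_one hden]
      push_cast at hsum ⊢
      linarith
    linarith
  · -- nonempty coalition
    -- S ⊆ Afin.erase a
    have hSsub : S ⊆ Afin.erase a := by
      intro c hc
      have hpc := hpref v hv c hc
      unfold Prefers at hpc
      have hcA : c.val < k + 1 := by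
        by_contra hcB
        push_neg at hcB
        have := hAB v a c ha hcB
        unfold Prefers at this
        exact absurd (lt_trans hpc this) (lt_irrefl _)
      refine Finset.mem_erase.2 ⟨?_, by simp [hAfin]; omega⟩
      intro hca
      subst hca
      exact absurd hpc (lt_irrefl _)
    have hScard : S.card ≤ k := by
      have := Finset.card_le_card hSsub
      rw [Finset.card_erase_of_mem (by simp [hAfin]; omega), hAcard] at this
      omega
    -- sum of apv over S
    have hSsum : ∑ c ∈ S, (apv rank k c : ℚ) = (S.card : ℚ) * k := by
      rw [Finset.sum_congr rfl (fun c hc => by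
        have hcA : c.val < k + 1 := by
          have := hSsub hc
          rw [Finset.mem_erase, hAfin, Finset.mem_filter] at this
          exact this.2.2
        rw [hapv c hcA])]
      simp [mul_comm]
    rw [hSsum] at hineq
    -- derive k + 1 < T.card + S.card
    have hsimp : (S.card : ℚ) * k / (((k + 1 : ℕ) : ℚ) * k) = (S.card : ℚ) / ((k + 1 : ℕ) : ℚ) := by
      rw [mul_div_mul_right _ _ (ne_of_gt hkQ)]
    rw [hsimp] at hineq
    have hmain : (1 : ℚ) < ((T.card : ℚ) + S.card) / ((k + 1 : ℕ) : ℚ) := by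
      rw [add_div]
      linarith [hineq]
    have hmain2 := (one_lt_div hk1Q).mp hmain
    have hcards : k + 1 < T.card + S.card := by
      have h2 : ((k + 1 : ℕ) : ℚ) < ((T.card + S.card : ℕ) : ℚ) := by push_cast at hmain2 ⊢; linarith
      exact_mod_cast h2
    -- embed T into Fin m
    set T' : Finset (Fin m) := T.image (fun w : Fin (k + 1) => (⟨w.val, lt_of_lt_of_le w.isLt hk1m⟩ : Fin m)) with hT'
    have hT'card : T'.card = T.card := by
      rw [hT']
      apply Finset.card_image_of_injective
      intro x y hxy
      have : x.val = y.val := by simpa [Fin.ext_iff] using hxy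
      exact Fin.ext this
    have hT'sub : T' ⊆ Afin := by
      intro x hx
      rw [hT', Finset.mem_image] at hx
      obtain ⟨w, _, rfl⟩ := hx
      simp [hAfin]
      have := w.isLt
      omega
    have hSsub' : S ⊆ Afin := fun c hc => (Finset.mem_erase.1 (hSsub hc)).2
    -- T' and S must intersect
    have hinter : (T' ∩ S).Nonempty := by
      by_contra hcon
      rw [Finset.not_nonempty_iff_eq_empty] at hcon
      have hdisj : Disjoint T' S := Finset.disjoint_iff_inter_eq_empty.2 hcon
      have hunion : (T' ∪ S).card = T'.card + S.card := Finset.card_union_of_disjoint hdisj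
      have hsub : T' ∪ S ⊆ Afin := Finset.union_subset hT'sub hSsub'
      have := Finset.card_le_card hsub
      rw [hunion, hT'card, hAcard] at this
      omega
    obtain ⟨c, hc⟩ := hinter
    rw [Finset.mem_inter] at hc
    obtain ⟨hcT', hcS⟩ := hc
    rw [hT', Finset.mem_image] at hcT'
    obtain ⟨w, hwT, rfl⟩ := hcT'
    -- voter w prefers its bottom over a: contradiction
    have hpw := hpref w hwT _ hcS
    unfold Prefers at hpw
    by_cases hwa : a.val = w.val
    · have : a = (⟨w.val, lt_of_lt_of_le w.isLt hk1m⟩ : Fin m) := Fin.ext hwa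
      rw [this] at hpw
      exact absurd hpw (lt_irrefl _)
    · have := hbot w a ha hwa
      unfold Prefers at this
      exact absurd (lt_trans hpw this) (lt_irrefl _)
end

section
/- Let α ∈ [1/2, 1) and let m satisfy m − ⌊αm⌋ = 2. In the cyclic election with m candidates c_1,…,c_m and m voters where voter v_i ranks c_i ≻ c_{i+1} ≻ ⋯ ≻ c_m ≻ c_1 ≻ ⋯ ≻ c_{i−1}, the distance table d(v_1,c_j)=10+δ(j−1); d(v_2,c_1)=5; d(v_i,c_j)=1+(j−1)δ for 2 ≤ i ≤ j; d(v_i,c_j)=3+(j−1)δ for 3 ≤ i, j < i (with 0 < δ < 1/m) defines a metric consistent with the rankings, and under it cost^α(c_m) = 1+(m−1)δ while cost^α(c_1) ≥ 5, where cost^α(x) is the distance from x to its ⌊αm+1⌋-th closest voter. -/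
/-- The `α`-percentile cost of candidate `j`: the distance from `j` to its
`⌊αm+1⌋`-th closest voter (index `⌊αm⌋` in the sorted list of voter distances),
for an election with `m` voters and candidates indexed by `Fin m`. -/
noncomputable def pcost (m : ℕ) (d : Fin m → Fin m → ℝ) (α : ℝ) (j : Fin m) : ℝ :=
  ((Finset.univ.val.map fun i : Fin m => d i j).sort (· ≤ ·)).getD ⌊α * m⌋₊ 0

private lemma sorted_rep (k : ℕ) (a : ℝ) : (List.replicate k a).Pairwise (· ≤ ·) := by
  induction k with
  | zero => simp
  | succ n ih =>
    rw [List.replicate_succ, List.pairwise_cons]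
    exact ⟨fun b hb => le_of_eq (List.eq_of_mem_replicate hb).symm, ih⟩

private lemma sort_coe_eq {l L : List ℝ} (hp : l.Perm L) (hL : L.Pairwise (· ≤ ·)) :
    Multiset.sort (↑l : Multiset ℝ) (· ≤ ·) = L :=
  List.Perm.eq_of_pairwise' (Multiset.pairwise_sort _ _) hL
    ((Multiset.coe_eq_coe.mp (Multiset.sort_eq _ _)).trans hp)

/-- The lower-bound construction for `α`-percentile distortion: in the cyclic election
with `m` voters and `m` candidates (voter `v_i` ranks
`c_i ≻ c_{i+1} ≻ ⋯ ≻ c_{m-1} ≻ c_0 ≻ ⋯ ≻ c_{i-1}`), the given distance table is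
consistent with the rankings and satisfies the four-point triangle inequality, and
under it `cost^α(c_{m-1}) = 1 + (m-1)δ` while `cost^α(c_0) ≥ 5`. -/
theorem percentile_lower_bound_construction
    (α : ℝ) (hα1 : 1 / 2 ≤ α) (hα2 : α < 1)
    (m : ℕ) (hm2 : 2 ≤ m) (hm : m - ⌊α * (m : ℝ)⌋₊ = 2)
    (δ : ℝ) (hδ0 : 0 < δ) (hδ1 : δ < 1 / m)
    (d : Fin m → Fin m → ℝ)
    (hd : ∀ i j : Fin m, d i j =
      if i.val = 0 then 10 + δ * j.val
      else if i.val = 1 ∧ j.val = 0 then 5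
      else if i.val ≤ j.val then 1 + δ * j.val
      else 3 + δ * j.val)
    (rank : Fin m → Fin m ≃ Fin m)
    (hrank : ∀ i j : Fin m, ((rank i) j : ℕ) = (j.val + m - i.val) % m) :
    (∀ (i j j' : Fin m), Prefers rank i j j' → d i j ≤ d i j') ∧
    (∀ (i i' j j' : Fin m), d i j ≤ d i' j + d i' j' + d i j') ∧
    pcost m d α ⟨m - 1, by omega⟩ = 1 + δ * ((m : ℝ) - 1) ∧
    5 ≤ pcost m d α ⟨0, by omega⟩ := by
  have hmR : (0 : ℝ) < m := by positivity
  have hδm : δ * m < 1 := by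
    have h1 := mul_lt_mul_of_pos_right hδ1 hmR
    rwa [one_div, inv_mul_cancel₀ (ne_of_gt hmR)] at h1
  have key : ∀ x : Fin m, 0 ≤ δ * x.val ∧ δ * x.val < 1 := by
    intro x
    have hx : (x.val : ℝ) < m := by exact_mod_cast x.isLt
    constructor
    · positivity
    · nlinarith
  have mono : ∀ x y : Fin m, x.val ≤ y.val → δ * x.val ≤ δ * y.val := by
    intro x y h
    have : (x.val : ℝ) ≤ y.val := by exact_mod_cast h
    nlinarith
  have lb : ∀ a b : Fin m, 1 + δ * b.val ≤ d a b := by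
    intro a b
    rw [hd]
    split_ifs <;> linarith [(key b).1, (key b).2]
  refine ⟨?_, ?_, ?_, ?_⟩
  · -- consistency with rankings
    intro i j j' hp
    have hmod : ∀ a b : Fin m,
        (a.val + m - b.val) % m =
          if b.val ≤ a.val then a.val - b.val else a.val + m - b.val := by
      intro a b
      have ha := a.isLt
      have hb := b.isLt
      split
      · next h =>
        have he : a.val + m - b.val = (a.val - b.val) + m := by omega
        rw [he, Nat.add_mod_right]
        exact Nat.mod_eq_of_lt (by omega)
      · next h => exact Nat.mod_eq_of_lt (by omega)
    simp only [Prefers, Fin.lt_def, hrank, hmod] at hp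
    have him := i.isLt
    have hjm := j.isLt
    have hj'm := j'.isLt
    rw [hd, hd]
    split_ifs at hp ⊢ <;>
      first
      | (exfalso; omega)
      | (linarith [mono j j' (by omega), (key j).1, (key j).2, (key j').1, (key j').2])
      | (linarith [(key j).1, (key j).2, (key j').1, (key j').2])
  · -- four-point triangle inequality
    intro i i' j j'
    rw [hd i j]
    split_ifs with h0 h1 h2
    · have hij' : d i j' = 10 + δ * j'.val := by
        rw [hd, if_pos h0]
      linarith [lb i' j, lb i' j', (key j').1]
    · by_cases hj' : j'.val = 0
      · have hij' : d i j' = 5 := by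
          rw [hd, if_neg (by omega), if_pos ⟨h1.1, hj'⟩]
        linarith [lb i' j, lb i' j', (key j).1, (key j').1]
      · have hij' : d i j' = 1 + δ * j'.val := by
          rw [hd, if_neg (by omega), if_neg (by simp [hj']), if_pos (by omega)]
        have h3 : (3 : ℝ) ≤ d i' j := by
          rw [hd]
          have hj0 := h1.2
          split_ifs <;> first | (exfalso; omega) | linarith [(key j).1]
        linarith [lb i' j', (key j').1, h3]
    · linarith [lb i' j, lb i' j', lb i j', (key j').1]
    · linarith [lb i' j, lb i' j', lb i j', (key j').1]
  · -- pcost of candidate m-1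
    obtain ⟨k, rfl⟩ : ∃ k, m = k + 2 := ⟨m - 2, by omega⟩
    have hfloor : ⌊α * ((k + 2 : ℕ) : ℝ)⌋₊ = k := by omega
    set j1 : Fin (k + 2) := ⟨k + 2 - 1, by omega⟩ with hj1
    have hval : j1.val = k + 1 := rfl
    have hj1v : (j1.val : ℝ) = (k : ℝ) + 1 := by rw [hval]; push_cast; ring
    have hmap : (Finset.univ.val.map fun i : Fin (k + 2) => d i j1) =
        ↑((10 + δ * ((k : ℝ) + 1)) :: List.replicate (k + 1) (1 + δ * ((k : ℝ) + 1))) := by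
      rw [Fin.univ_val_map]
      congr 1
      rw [List.ofFn_succ]
      congr 1
      · rw [hd, if_pos (by simp), hj1v]
      · have hfn : (fun i : Fin (k + 1) => d i.succ j1) =
            fun _ => 1 + δ * ((k : ℝ) + 1) := by
          funext x
          have hx := x.isLt
          rw [hd, if_neg (by simp), if_neg (by simp [hval]),
            if_pos (by simp only [Fin.val_succ, hval]; omega), hj1v]
        rw [hfn, List.ofFn_const]
    have hsorted : (List.replicate (k + 1) (1 + δ * ((k : ℝ) + 1)) ++
        [10 + δ * ((k : ℝ) + 1)]).Pairwise (· ≤ ·) := by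
      rw [List.pairwise_append]
      refine ⟨sorted_rep _ _, by simp, ?_⟩
      intro a ha b hb
      rw [List.eq_of_mem_replicate ha, List.mem_singleton.mp hb]
      linarith
    have hperm : ((10 + δ * ((k : ℝ) + 1)) ::
        List.replicate (k + 1) (1 + δ * ((k : ℝ) + 1))).Perm
        (List.replicate (k + 1) (1 + δ * ((k : ℝ) + 1)) ++ [10 + δ * ((k : ℝ) + 1)]) := by
      exact (List.perm_append_singleton _ _).symm
    have hsort := sort_coe_eq hperm hsorted
    rw [pcost, hfloor, hmap, hsort, List.getD_append _ _ _ _ (by simp),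
      List.getD_eq_getElem _ _ (by simp), List.getElem_replicate]
    push_cast
    ring
  · -- pcost of candidate 0
    obtain ⟨k, rfl⟩ : ∃ k, m = k + 2 := ⟨m - 2, by omega⟩
    have hfloor : ⌊α * ((k + 2 : ℕ) : ℝ)⌋₊ = k := by omega
    set j0 : Fin (k + 2) := ⟨0, by omega⟩ with hj0
    have hmap : (Finset.univ.val.map fun i : Fin (k + 2) => d i j0) =
        ↑((10 : ℝ) :: 5 :: List.replicate k 3) := by
      rw [Fin.univ_val_map]
      congr 1
      rw [List.ofFn_succ, List.ofFn_succ]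
      congr 1
      · rw [hd, if_pos (by simp)]
        simp [hj0]
      congr 1
      · rw [hd, if_neg (by simp), if_pos (by simp [hj0])]
      · have hfn : (fun i : Fin k => d i.succ.succ j0) = fun _ => (3 : ℝ) := by
          funext x
          rw [hd, if_neg (by simp), if_neg (by simp), if_neg (by simp [hj0])]
          simp [hj0]
        rw [hfn, List.ofFn_const]
    have hsorted : (List.replicate k (3 : ℝ) ++ [5, 10]).Pairwise (· ≤ ·) := by
      rw [List.pairwise_append]
      refine ⟨sorted_rep _ _, by norm_num, ?_⟩
      intro a ha b hb
      rw [List.eq_of_mem_replicate ha]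
      simp only [List.mem_cons, List.mem_singleton, List.not_mem_nil, or_false] at hb
      rcases hb with rfl | rfl <;> norm_num
    have hperm : ((10 : ℝ) :: 5 :: List.replicate k 3).Perm
        (List.replicate k (3 : ℝ) ++ [5, 10]) := by
      refine (List.Perm.swap 5 10 _).trans ?_
      exact List.perm_append_comm (l₁ := [5, 10])
    have hsort := sort_coe_eq hperm hsorted
    rw [pcost, hfloor, hmap, hsort, List.getD_append_right _ _ _ _ (by simp)]
    simp
end
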